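/- Let ε > 0, C > 0 and r > 0. Suppose that for all sequences (b_j)_{j≥1}, (d_k)_{k≥1}, (c_l)_{l≥2} of nonnegative real numbers with only finitely many nonzero terms and with c_l ≤ ε for every l ≥ 2, the inequality Σ_{l=2}^∞ c_l² (Σ_{j=1}^{l−1} b_j d_{l−j})² ≤ C · (Σ_{l=2}^∞ c_l² (l−1))^r · (Σ_{j=1}^∞ b_j²) · (Σ_{k=1}^∞ d_k²) holds. Then necessarily r ≥ 1/2. -/
import Mathlib


open Finset

lemma cube_le_three_sum_sq (N : ℕ) :
    (N:ℝ)^3 ≤ 3 * ∑ m ∈ Finset.range (N+1), (m:ℝ)^2 := by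
  induction N with
  | zero => simp
  | succ n ih =>
    rw [Finset.sum_range_succ]
    push_cast
    push_cast at ih
    nlinarith [ih, Nat.cast_nonneg (α := ℝ) n]

/-- The combinatorial core of the sharpness of the exponent `1/2` in Corollary 3
of Grafakos–He–Slavíková: if for some `ε, C > 0` and `r > 0` the inequality
`Σ_{l≥2} c_l² (Σ_{j=1}^{l-1} b_j d_{l-j})² ≤ C (Σ_{l≥2} c_l²(l-1))^r (Σ_j b_j²)(Σ_k d_k²)`
holds for all finitely supported sequences of nonnegative reals with `c_l ≤ ε`,
then `r ≥ 1/2`.  Sequences are indexed so that `b_j, d_k` are supported in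
`j, k ≥ 1` and `c_l` in `l ≥ 2`. -/
theorem statement18 (ε C r : ℝ) (hε : 0 < ε) (hC : 0 < C) (hr : 0 < r)
    (H : ∀ b d c : ℕ → ℝ,
      (∀ j, 0 ≤ b j) → (∀ j, 0 ≤ d j) → (∀ l, 0 ≤ c l) →
      b 0 = 0 → d 0 = 0 → c 0 = 0 → c 1 = 0 →
      (Function.support b).Finite → (Function.support d).Finite →
      (Function.support c).Finite →
      (∀ l, c l ≤ ε) →
      ∑' l : ℕ, (c l) ^ 2 * (∑ j ∈ Finset.Ico 1 l, b j * d (l - j)) ^ 2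
        ≤ C * (∑' l : ℕ, (c l) ^ 2 * ((l : ℝ) - 1)) ^ r *
            (∑' j : ℕ, (b j) ^ 2) * (∑' k : ℕ, (d k) ^ 2)) :
    1 / 2 ≤ r := by
  by_contra hcon
  push_neg at hcon
  have hexp : 0 < 1 - 2*r := by linarith
  have hK : 0 < 3 * C * ε ^ (2*r - 2) := by positivity
  set K := 3 * C * ε ^ (2*r - 2) with hKdef
  obtain ⟨N, hN⟩ := exists_nat_gt (max 1 (K ^ (1/(1 - 2*r))))
  have hN1 : (1:ℝ) < N := lt_of_le_of_lt (le_max_left _ _) hN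
  have hN0 : (0:ℝ) < N := by linarith
  set b : ℕ → ℝ := fun j => if j ∈ Finset.Ico 1 (N+1) then (1:ℝ) else 0 with hb
  set c : ℕ → ℝ := fun l => if l ∈ Finset.Ico 2 (N+2) then ε else 0 with hc
  have hbnn : ∀ j, 0 ≤ b j := fun j => by
    simp only [hb]; split_ifs <;> norm_num
  have hcnn : ∀ l, 0 ≤ c l := fun l => by
    simp only [hc]; split_ifs; exacts [hε.le, le_rfl]
  have hb0 : b 0 = 0 := by simp [hb]
  have hc0 : c 0 = 0 := by simp [hc]
  have hc1 : c 1 = 0 := by simp [hc]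
  have hcle : ∀ l, c l ≤ ε := fun l => by
    simp only [hc]; split_ifs; exacts [le_rfl, hε.le]
  have hbsupp : (Function.support b).Finite := by
    refine Set.Finite.subset (Finset.Ico 1 (N+1)).finite_toSet ?_
    intro x hx
    simp only [Function.mem_support, hb] at hx
    by_contra hmem
    exact hx (if_neg (by simpa using hmem))
  have hcsupp : (Function.support c).Finite := by
    refine Set.Finite.subset (Finset.Ico 2 (N+2)).finite_toSet ?_
    intro x hx
    simp only [Function.mem_support, hc] at hx
    by_contra hmem
    exact hx (if_neg (by simpa using hmem))
  have hb2 : ∑' j : ℕ, (b j)^2 = (N:ℝ) := by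
    have h0 : ∀ x ∉ Finset.Ico 1 (N+1), (b x)^2 = 0 := by
      intro x hx; simp only [hb]; rw [if_neg hx]; norm_num
    rw [tsum_eq_sum h0]
    have h1 : ∀ x ∈ Finset.Ico 1 (N+1), (b x)^2 = 1 := by
      intro x hx; simp only [hb]; rw [if_pos hx]; norm_num
    rw [Finset.sum_congr rfl h1, Finset.sum_const, Nat.card_Ico, nsmul_eq_mul, mul_one]
    simp
  have hconv : ∀ l ∈ Finset.Ico 2 (N+2),
      ∑ j ∈ Finset.Ico 1 l, b j * b (l-j) = (l:ℝ) - 1 := by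
    intro l hl
    simp only [Finset.mem_Ico] at hl
    have hone : ∀ j ∈ Finset.Ico 1 l, b j * b (l-j) = 1 := by
      intro j hj
      simp only [Finset.mem_Ico] at hj
      have h1 : b j = 1 := if_pos (Finset.mem_Ico.mpr ⟨hj.1, by omega⟩)
      have h2 : b (l-j) = 1 := if_pos (Finset.mem_Ico.mpr ⟨by omega, by omega⟩)
      rw [h1, h2, mul_one]
    rw [Finset.sum_congr rfl hone, Finset.sum_const, Nat.card_Ico, nsmul_eq_mul, mul_one]
    have h1l : 1 ≤ l := by omega
    push_cast [Nat.cast_sub h1l]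
    ring
  have hNN : N + 2 - 2 = N := rfl
  have hLHS : ∑' l : ℕ, (c l)^2 * (∑ j ∈ Finset.Ico 1 l, b j * b (l-j))^2
      = ε^2 * ∑ i ∈ Finset.range N, ((i:ℝ)+1)^2 := by
    have h0 : ∀ x ∉ Finset.Ico 2 (N+2),
        (c x)^2 * (∑ j ∈ Finset.Ico 1 x, b j * b (x-j))^2 = 0 := by
      intro x hx; simp only [hc]; rw [if_neg hx]; ring
    rw [tsum_eq_sum h0]
    have h1 : ∀ l ∈ Finset.Ico 2 (N+2),
        (c l)^2 * (∑ j ∈ Finset.Ico 1 l, b j * b (l-j))^2 = ε^2 * ((l:ℝ)-1)^2 := by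
      intro l hl
      rw [hconv l hl]; simp only [hc]; rw [if_pos hl]
    rw [Finset.sum_congr rfl h1, Finset.sum_Ico_eq_sum_range, hNN, ← Finset.mul_sum]
    congr 1
    apply Finset.sum_congr rfl
    intro i _
    push_cast
    ring
  have hT : ∑' l : ℕ, (c l)^2 * ((l:ℝ) - 1)
      = ε^2 * ∑ i ∈ Finset.range N, ((i:ℝ)+1) := by
    have h0 : ∀ x ∉ Finset.Ico 2 (N+2), (c x)^2 * ((x:ℝ) - 1) = 0 := by
      intro x hx; simp only [hc]; rw [if_neg hx]; ring
    rw [tsum_eq_sum h0]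
    have h1 : ∀ l ∈ Finset.Ico 2 (N+2), (c l)^2 * ((l:ℝ) - 1) = ε^2 * ((l:ℝ)-1) := by
      intro l hl
      simp only [hc]; rw [if_pos hl]
    rw [Finset.sum_congr rfl h1, Finset.sum_Ico_eq_sum_range, hNN, ← Finset.mul_sum]
    congr 1
    apply Finset.sum_congr rfl
    intro i _
    push_cast
    ring
  have hTnn : 0 ≤ ∑' l : ℕ, (c l)^2 * ((l:ℝ) - 1) := by
    rw [hT]
    have : (0:ℝ) ≤ ∑ i ∈ Finset.range N, ((i:ℝ)+1) :=
      Finset.sum_nonneg fun i _ => by positivity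
    positivity
  have hTle : ∑' l : ℕ, (c l)^2 * ((l:ℝ) - 1) ≤ ε^2 * (N:ℝ)^2 := by
    rw [hT]
    have h2 : ∑ i ∈ Finset.range N, ((i:ℝ)+1) ≤ ∑ i ∈ Finset.range N, (N:ℝ) := by
      apply Finset.sum_le_sum
      intro i hi
      have := Finset.mem_range.mp hi
      have : (i:ℝ) + 1 ≤ N := by exact_mod_cast Nat.succ_le_of_lt this
      linarith
    rw [Finset.sum_const, Finset.card_range, nsmul_eq_mul] at h2
    nlinarith [sq_nonneg ε]
  have hmain := H b b c hbnn hbnn hcnn hb0 hb0 hc0 hc1 hbsupp hbsupp hcsupp hcle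
  rw [hLHS, hb2] at hmain
  have hS : (N:ℝ)^3 / 3 ≤ ∑ i ∈ Finset.range N, ((i:ℝ)+1)^2 := by
    have h1 : ∑ m ∈ Finset.range (N+1), (m:ℝ)^2
        = (∑ i ∈ Finset.range N, ((i:ℝ)+1)^2) + 0 := by
      rw [Finset.sum_range_succ' (fun m => (m:ℝ)^2) N]
      push_cast
      norm_num
    have h2 := cube_le_three_sum_sq N
    rw [h1] at h2
    linarith
  have hTr : (∑' l : ℕ, (c l)^2 * ((l:ℝ) - 1)) ^ r ≤ (ε^2 * (N:ℝ)^2) ^ r :=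
    Real.rpow_le_rpow hTnn hTle hr.le
  have hfac : (ε^2 * (N:ℝ)^2)^r = ε^(2*r) * (N:ℝ)^(2*r) := by
    rw [show ε^2 * (N:ℝ)^2 = (ε * N)^2 by ring, ← Real.rpow_natCast (ε * (N:ℝ)) 2,
      ← Real.rpow_mul (by positivity), Real.mul_rpow hε.le hN0.le]
    norm_num
  have hchain : ε^2 * ((N:ℝ)^3/3) ≤ C * (ε^(2*r) * (N:ℝ)^(2*r)) * (N:ℝ) * (N:ℝ) := by
    calc ε^2 * ((N:ℝ)^3/3) ≤ ε^2 * ∑ i ∈ Finset.range N, ((i:ℝ)+1)^2 :=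
          mul_le_mul_of_nonneg_left hS (sq_nonneg ε)
      _ ≤ C * (∑' l : ℕ, (c l)^2 * ((l:ℝ) - 1))^r * (N:ℝ) * (N:ℝ) := hmain
      _ ≤ C * (ε^(2*r) * (N:ℝ)^(2*r)) * (N:ℝ) * (N:ℝ) := by
          rw [← hfac]
          exact mul_le_mul_of_nonneg_right
            (mul_le_mul_of_nonneg_right
              (mul_le_mul_of_nonneg_left hTr hC.le) hN0.le) hN0.le
  have hN2 : (0:ℝ) < (N:ℝ)^2 := by positivity
  have hstep : ε^2 * (N:ℝ) ≤ 3 * C * ε^(2*r) * (N:ℝ)^(2*r) := by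
    have h4 : ε^2 * ((N:ℝ)^3/3) = (ε^2 * (N:ℝ)/3) * (N:ℝ)^2 := by ring
    have h5 : C * (ε^(2*r) * (N:ℝ)^(2*r)) * (N:ℝ) * (N:ℝ)
        = (C * ε^(2*r) * (N:ℝ)^(2*r)) * (N:ℝ)^2 := by ring
    rw [h4, h5] at hchain
    have := le_of_mul_le_mul_right hchain hN2
    linarith
  have hε2 : (0:ℝ) < ε^2 := by positivity
  have key : (N:ℝ)^(1 - 2*r) ≤ K := by
    have hNr : 0 < (N:ℝ)^(2*r) := Real.rpow_pos_of_pos hN0 (2*r)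
    have e1 : (N:ℝ)^(1 - 2*r) = (N:ℝ) / (N:ℝ)^(2*r) := by
      rw [Real.rpow_sub hN0, Real.rpow_one]
    have e2 : ε^(2*r - 2) = ε^(2*r) / ε^2 := by
      rw [Real.rpow_sub hε]
      congr 1
      rw [← Real.rpow_natCast ε 2]
      norm_num
    rw [e1, hKdef, e2, div_le_iff₀ hNr]
    have heq : 3 * C * (ε^(2*r) / ε^2) * (N:ℝ)^(2*r) * ε^2
        = 3 * C * ε^(2*r) * (N:ℝ)^(2*r) := by
      field_simp
    have h3 : (N:ℝ) * ε^2 ≤ 3 * C * (ε^(2*r) / ε^2) * (N:ℝ)^(2*r) * ε^2 := by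
      rw [heq]; linarith [hstep]
    exact le_of_mul_le_mul_right h3 hε2
  have key2 : K < (N:ℝ)^(1 - 2*r) := by
    have h1 : K ^ (1/(1-2*r)) < (N:ℝ) := lt_of_le_of_lt (le_max_right _ _) hN
    have h2 := Real.rpow_lt_rpow (Real.rpow_nonneg hK.le _) h1 hexp
    rwa [← Real.rpow_mul hK.le, one_div, inv_mul_cancel₀ (ne_of_gt hexp),
      Real.rpow_one] at h2
  linarith
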